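/- Let A and B be symmetric positive definite matrices with A - B positive semidefinite. Then trace(A⁻¹(A - B)) ≤ ln(det A / det B). -/

import Mathlib

open Matrix

/-- Conjugating a positive definite matrix by an invertible matrix preserves
positive definiteness. -/
lemma posDef_conjTranspose_mul_mul_of_isUnit {n : Type*} [Fintype n] [DecidableEq n]
    {B C : Matrix n n ℝ} (hB : B.PosDef) (hC : IsUnit C.det) :
    (Cᴴ * B * C).PosDef := by
  refine PosDef.of_dotProduct_mulVec_pos ?_ ?_
  · exact isHermitian_conjTranspose_mul_mul C hB.1
  · intro x hx
    have hCx : C *ᵥ x ≠ 0 := by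
      intro h
      apply hx
      have := congrArg (fun v => C⁻¹ *ᵥ v) h
      simpa [mulVec_mulVec, Matrix.nonsing_inv_mul C hC] using this
    simpa only [star_mulVec, dotProduct_mulVec, vecMul_vecMul] using hB.dotProduct_mulVec_pos hCx

/-- The trace of a real hermitian matrix is the sum of its eigenvalues. -/
lemma trace_eq_sum_eigenvalues_real {n : Type*} [Fintype n] [DecidableEq n]
    {M : Matrix n n ℝ} (hM : M.IsHermitian) :
    M.trace = ∑ i, hM.eigenvalues i := by
  simpa using hM.trace_eq_sum_eigenvalues

lemma trace_aux {d : ℕ}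
    (A B S : Matrix (Fin d) (Fin d) ℝ)
    (hB : B.PosDef) (hS : S.PosSemidef) (hSS : S * S = A)
    (hdetA : 0 < A.det) (hdetB : 0 < B.det) :
    (A⁻¹ * (A - B)).trace ≤ Real.log (A.det / B.det) := by
  have hdetS : S.det ≠ 0 := by
    intro h
    rw [← hSS, det_mul, h, zero_mul] at hdetA
    exact lt_irrefl _ hdetA
  have hSunit : IsUnit S.det := isUnit_iff_ne_zero.mpr hdetS
  have hSinvH : (S⁻¹)ᴴ = S⁻¹ := by
    rw [Matrix.conjTranspose_nonsing_inv, hS.isHermitian.eq]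
  have hSinvUnit : IsUnit (S⁻¹).det := by
    rw [Matrix.det_nonsing_inv]
    exact isUnit_iff_ne_zero.mpr (by simp [Ring.inverse_eq_inv, hdetS])
  obtain ⟨M, hMdef⟩ : ∃ M, M = S⁻¹ * B * S⁻¹ := ⟨_, rfl⟩
  have hM : M.PosDef := by
    rw [hMdef]
    nth_rewrite 1 [← hSinvH]
    exact posDef_conjTranspose_mul_mul_of_isUnit hB hSinvUnit
  have hMh : M.IsHermitian := hM.isHermitian
  -- determinant of M
  have hdetSinv : (S⁻¹).det = (S.det)⁻¹ := by
    rw [Matrix.det_nonsing_inv, Ring.inverse_eq_inv]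
  have hdetSS : S.det * S.det = A.det := by rw [← det_mul, hSS]
  have hdetM : M.det = B.det / A.det := by
    rw [hMdef, det_mul, det_mul, hdetSinv, ← hdetSS]
    field_simp
  -- trace identity : trace (A⁻¹ * (A - B)) = d - trace M
  have hAinv : A⁻¹ = S⁻¹ * S⁻¹ := by
    rw [← hSS, Matrix.mul_inv_rev]
  have htrace : (A⁻¹ * (A - B)).trace = (d : ℝ) - M.trace := by
    have h1 : A⁻¹ * A = 1 := Matrix.nonsing_inv_mul A (isUnit_iff_ne_zero.mpr hdetA.ne')
    have h2 : (A⁻¹ * B).trace = M.trace := by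
      rw [hAinv, hMdef, Matrix.mul_assoc, Matrix.trace_mul_comm, Matrix.mul_assoc]
    rw [Matrix.mul_sub, trace_sub, h1, trace_one, h2]
    simp
  rw [htrace]
  -- eigenvalues
  have heig : ∀ i, 0 < hMh.eigenvalues i := hM.eigenvalues_pos
  have htrM : M.trace = ∑ i, hMh.eigenvalues i := trace_eq_sum_eigenvalues_real hMh
  have hdet_prod : M.det = ∏ i, hMh.eigenvalues i := by
    have := hMh.det_eq_prod_eigenvalues
    simpa using this
  -- the key inequality
  have key : (d : ℝ) - ∑ i, hMh.eigenvalues i ≤ - Real.log (∏ i, hMh.eigenvalues i) := by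
    rw [Real.log_prod (fun i _ => (heig i).ne')]
    have : ∀ i ∈ Finset.univ, (1 : ℝ) - hMh.eigenvalues i ≤ - Real.log (hMh.eigenvalues i) := by
      intro i _
      have := Real.log_le_sub_one_of_pos (heig i)
      linarith
    calc (d : ℝ) - ∑ i, hMh.eigenvalues i
        = ∑ _i : Fin d, (1 : ℝ) - ∑ i, hMh.eigenvalues i := by simp
      _ = ∑ i, ((1 : ℝ) - hMh.eigenvalues i) := by rw [Finset.sum_sub_distrib]
      _ ≤ ∑ i, (- Real.log (hMh.eigenvalues i)) := Finset.sum_le_sum this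
      _ = - ∑ i, Real.log (hMh.eigenvalues i) := by rw [Finset.sum_neg_distrib]
  rw [htrM]
  calc (d : ℝ) - ∑ i, hMh.eigenvalues i
      ≤ - Real.log (∏ i, hMh.eigenvalues i) := key
    _ = - Real.log (B.det / A.det) := by rw [← hdet_prod, hdetM]
    _ = Real.log (A.det / B.det) := by
        rw [Real.log_div hdetB.ne' hdetA.ne', Real.log_div hdetA.ne' hdetB.ne']
        ring

/-- for positive definite `A ⪰ B`, `trace(A⁻¹(A-B)) ≤ ln(det A / det B)`. -/
theorem trace_inv_mul_sub_le_log_det_div {d : ℕ}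
    (A B : Matrix (Fin d) (Fin d) ℝ)
    (hA : A.PosDef) (hB : B.PosDef) (hAB : (A - B).PosSemidef) :
    (A⁻¹ * (A - B)).trace ≤ Real.log (A.det / B.det) := by
  open scoped MatrixOrder in
  exact trace_aux A B (CFC.sqrt A) hB (CFC.sqrt_nonneg A).posSemidef
    (CFC.sqrt_mul_sqrt_self A hA.posSemidef.nonneg) hA.det_pos hB.det_pos
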